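/- arXiv:2102.07042 — 4 statements merged into one kernel-verified Lean document; each statement's English description precedes it below -/
import Mathlib

section
/- Every module over a von Neumann regular ring is flat. -/
private theorem stmt2_aux (A : Type*) [Ring A]
    (hreg : ∀ x : A, ∃ y : A, x = x * y * x)
    (M : Type*) [AddCommGroup M] [Module A M] :
    ∀ (n : ℕ) (a : Fin n → A) (m : Fin n → M),
    (∑ i, a i • m i = 0) →
    ∃ (k : ℕ) (b : Fin n → Fin k → A) (m' : Fin k → M),
      (∀ j, ∑ i, a i * b i j = 0) ∧ ∀ i, m i = ∑ j, b i j • m' j := by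
  intro n
  induction n with
  | zero =>
    intro a m _
    exact ⟨0, fun _ => Fin.elim0, Fin.elim0, fun j => j.elim0, fun i => i.elim0⟩
  | succ n ih =>
    intro a m h
    obtain ⟨y, hy⟩ := hreg (a 0)
    rw [Fin.sum_univ_succ] at h
    have htail : ∑ i : Fin n, a i.succ • m i.succ = -(a 0 • m 0) := by
      rw [add_comm] at h
      exact eq_neg_of_add_eq_zero_left h
    have hrel : ∑ i : Fin n, (a i.succ - a 0 * y * a i.succ) • m i.succ = 0 := by
      have e1 : ∑ i : Fin n, (a i.succ - a 0 * y * a i.succ) • m i.succ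
          = ∑ i : Fin n, a i.succ • m i.succ
            - (a 0 * y) • ∑ i : Fin n, a i.succ • m i.succ := by
        rw [Finset.smul_sum, ← Finset.sum_sub_distrib]
        refine Finset.sum_congr rfl fun i _ => ?_
        rw [sub_smul, mul_smul]
      rw [e1, htail, smul_neg, sub_neg_eq_add, ← mul_smul, ← hy, neg_add_cancel]
    obtain ⟨k, b', m', hb1, hb2⟩ := ih (fun i => a i.succ - a 0 * y * a i.succ)
      (fun i => m i.succ) hrel
    refine ⟨k + 1,
      Fin.cases (Fin.snoc (fun j => -∑ i : Fin n, y * a i.succ * b' i j) (1 - y * a 0))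
        (fun i => Fin.snoc (b' i) 0),
      Fin.snoc m' (m 0), ?_, ?_⟩
    · intro j
      rw [Fin.sum_univ_succ]
      simp only [Fin.cases_zero, Fin.cases_succ]
      refine Fin.lastCases ?_ ?_ j
      · simp only [Fin.snoc_last]
        rw [mul_sub, mul_one, ← mul_assoc, ← hy, sub_self]
        simp
      · intro j
        simp only [Fin.snoc_castSucc]
        have h2 := hb1 j
        simp only [sub_mul] at h2
        rw [Finset.sum_sub_distrib] at h2
        rw [mul_neg, Finset.mul_sum]
        have e2 : ∀ i ∈ Finset.univ, a 0 * (y * a i.succ * b' i j)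
            = (a 0 * y * a i.succ) * b' i j := fun i _ => by rw [← mul_assoc, ← mul_assoc]
        rw [Finset.sum_congr rfl e2]
        exact neg_add_eq_zero.mpr (sub_eq_zero.mp h2).symm
    · intro i
      refine Fin.cases ?_ ?_ i
      · simp only [Fin.cases_zero]
        rw [Fin.sum_univ_castSucc]
        simp only [Fin.snoc_castSucc, Fin.snoc_last]
        have key : ∑ j : Fin k, (∑ i : Fin n, y * a i.succ * b' i j) • m' j
            = -((y * a 0) • m 0) := by
          calc ∑ j : Fin k, (∑ i : Fin n, y * a i.succ * b' i j) • m' j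
              = ∑ j : Fin k, ∑ i : Fin n, (y * a i.succ * b' i j) • m' j := by
                simp [Finset.sum_smul]
            _ = ∑ i : Fin n, ∑ j : Fin k, (y * a i.succ) • (b' i j • m' j) := by
                rw [Finset.sum_comm]
                exact Finset.sum_congr rfl fun i _ => Finset.sum_congr rfl fun j _ => by
                  rw [mul_smul]
            _ = ∑ i : Fin n, (y * a i.succ) • m i.succ := by
                refine Finset.sum_congr rfl fun i _ => ?_
                rw [← Finset.smul_sum, ← hb2 i]
            _ = y • ∑ i : Fin n, a i.succ • m i.succ := by
                rw [Finset.smul_sum]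
                exact Finset.sum_congr rfl fun i _ => by rw [mul_smul]
            _ = -((y * a 0) • m 0) := by rw [htail, smul_neg, mul_smul]
        have e3 : ∀ j ∈ Finset.univ,
            (-∑ i : Fin n, y * a i.succ * b' i j) • m' j
            = -((∑ i : Fin n, y * a i.succ * b' i j) • m' j) := fun j _ => by
          rw [neg_smul]
        rw [Finset.sum_congr rfl e3, Finset.sum_neg_distrib, key, neg_neg,
          sub_smul, one_smul]
        abel
      · intro i
        simp only [Fin.cases_succ]
        rw [Fin.sum_univ_castSucc]
        simp only [Fin.snoc_castSucc, Fin.snoc_last, zero_smul, add_zero]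
        exact hb2 i

/-- Every (left) module over a von Neumann regular ring is flat.  Since the ring is
not assumed commutative, flatness is expressed via the standard equational
criterion (equivalent to tensoring with `M` preserving injectivity): every linear
relation `∑ aᵢ • mᵢ = 0` in `M` is a consequence of relations holding in the ring. -/
theorem stmt2 (A : Type*) [Ring A]
    (hreg : ∀ x : A, ∃ y : A, x = x * y * x)
    (M : Type*) [AddCommGroup M] [Module A M]
    (n : ℕ) (a : Fin n → A) (m : Fin n → M)
    (h : ∑ i, a i • m i = 0) :
    ∃ (k : ℕ) (b : Fin n → Fin k → A) (m' : Fin k → M),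
      (∀ j, ∑ i, a i * b i j = 0) ∧ ∀ i, m i = ∑ j, b i j • m' j := by
  exact stmt2_aux A hreg M n a m h
end

section
/- Let M and N be injective right modules over a ring A such that M is isomorphic to a direct summand of N and N is isomorphic to a direct summand of M. Then M and N are isomorphic. -/
namespace BumbyAux

universe u v

variable {R : Type u} [Ring R]

section Ess

variable {M : Type v} [AddCommGroup M] [Module R M]

/-- `W` is an essential submodule of `H` (elementwise formulation). -/
def EssIn (W H : Submodule R M) : Prop :=
  W ≤ H ∧ ∀ x ∈ H, x ≠ 0 → ∃ r : R, r • x ∈ W ∧ r • x ≠ 0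

lemma essIn_self (W : Submodule R M) : EssIn W W :=
  ⟨le_rfl, fun x hx hx0 => ⟨1, by simpa using hx, by simpa using hx0⟩⟩

lemma EssIn.disjoint_eq_bot {W H K : Submodule R M} (h : EssIn W H)
    (hKH : K ≤ H) (hKW : K ⊓ W = ⊥) : K = ⊥ := by
  rw [eq_bot_iff]
  intro x hx
  rw [Submodule.mem_bot]
  by_contra hx0
  obtain ⟨r, hrW, hr0⟩ := h.2 x (hKH hx) hx0
  have : r • x ∈ K ⊓ W := ⟨K.smul_mem r hx, hrW⟩
  rw [hKW, Submodule.mem_bot] at this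
  exact hr0 this

lemma essIn_of_forall {W H : Submodule R M} (hle : W ≤ H)
    (h : ∀ K : Submodule R M, K ≤ H → K ⊓ W = ⊥ → K = ⊥) : EssIn W H := by
  refine ⟨hle, fun x hx hx0 => ?_⟩
  by_contra hc
  push_neg at hc
  have h1 : Submodule.span R {x} ⊓ W = ⊥ := by
    rw [eq_bot_iff]
    rintro y ⟨hy1, hy2⟩
    obtain ⟨r, rfl⟩ := Submodule.mem_span_singleton.mp hy1
    rw [Submodule.mem_bot]
    exact hc r hy2
  have h2 := h (Submodule.span R {x}) (Submodule.span_le.mpr (Set.singleton_subset_iff.mpr hx)) h1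
  exact hx0 (by simpa [h2] using Submodule.mem_span_singleton_self (R := R) x)

lemma EssIn.trans {W H H' : Submodule R M} (h1 : EssIn W H) (h2 : EssIn H H') :
    EssIn W H' := by
  refine ⟨h1.1.trans h2.1, fun x hx hx0 => ?_⟩
  obtain ⟨r, hrH, hr0⟩ := h2.2 x hx hx0
  obtain ⟨s, hsW, hs0⟩ := h1.2 _ hrH hr0
  exact ⟨s * r, by rwa [mul_smul], by rwa [mul_smul]⟩

end Ess

section Transfer

variable {M X : Type v} [AddCommGroup M] [Module R M] [AddCommGroup X] [Module R X]

lemma inj_retract (hM : Module.Injective R M) (i : X →ₗ[R] M) (p : M →ₗ[R] X)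
    (hpi : ∀ x, p (i x) = x) : Module.Injective R X := by
  constructor
  intro A B _ _ _ _ f hf g
  obtain ⟨h, hh⟩ := hM.out f hf (i ∘ₗ g)
  exact ⟨p ∘ₗ h, fun x => by simp [hh x, hpi]⟩

lemma inj_of_equiv (hM : Module.Injective R M) (e : M ≃ₗ[R] X) : Module.Injective R X :=
  inj_retract hM e.symm.toLinearMap e.toLinearMap (by simp)

lemma inj_prod {C D : Type v} [AddCommGroup C] [Module R C] [AddCommGroup D] [Module R D]
    (hC : Module.Injective R C) (hD : Module.Injective R D) :
    Module.Injective R (C × D) := by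
  constructor
  intro A B _ _ _ _ f hf g
  obtain ⟨h₁, hh₁⟩ := hC.out f hf (LinearMap.fst R C D ∘ₗ g)
  obtain ⟨h₂, hh₂⟩ := hD.out f hf (LinearMap.snd R C D ∘ₗ g)
  refine ⟨h₁.prod h₂, fun x => ?_⟩
  have e1 := hh₁ x
  have e2 := hh₂ x
  simp only [LinearMap.comp_apply, LinearMap.fst_apply, LinearMap.snd_apply] at e1 e2
  simp [LinearMap.prod_apply, e1, e2]

end Transfer

section Hull

variable {M : Type v} [AddCommGroup M] [Module R M]

theorem exists_hull (hM : Module.Injective R M) (W : Submodule R M) :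
    ∃ H K : Submodule R M, IsCompl H K ∧ EssIn W H ∧ Module.Injective R H := by
  classical
  -- Zorn: maximal essential extension H of W inside M
  have zorn1 : ∀ c ⊆ {H : Submodule R M | EssIn W H}, IsChain (· ≤ ·) c → ∀ y ∈ c,
      ∃ ub ∈ {H : Submodule R M | EssIn W H}, ∀ z ∈ c, z ≤ ub := by
    intro c hcs hchain y hy
    refine ⟨sSup c, ⟨le_trans (hcs hy).1 (le_sSup hy), fun x hx hx0 => ?_⟩,
      fun z hz => le_sSup hz⟩
    obtain ⟨H', hH'c, hxH'⟩ := (Submodule.mem_sSup_of_directed ⟨y, hy⟩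
      hchain.directedOn).mp hx
    exact (hcs hH'c).2 x hxH' hx0
  obtain ⟨H, hWleH, hH⟩ := zorn_le_nonempty₀ {H | EssIn W H} zorn1 W (essIn_self W)
  have hHess : EssIn W H := hH.prop
  -- Zorn: complement K of H
  have zorn2 : ∀ c ⊆ {K : Submodule R M | K ⊓ H = ⊥}, IsChain (· ≤ ·) c → ∀ y ∈ c,
      ∃ ub ∈ {K : Submodule R M | K ⊓ H = ⊥}, ∀ z ∈ c, z ≤ ub := by
    intro c hcs hchain y hy
    refine ⟨sSup c, ?_, fun z hz => le_sSup hz⟩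
    rw [Set.mem_setOf_eq, eq_bot_iff]
    rintro x ⟨hx1, hx2⟩
    obtain ⟨K', hK'c, hxK'⟩ := (Submodule.mem_sSup_of_directed ⟨y, hy⟩
      hchain.directedOn).mp hx1
    have : x ∈ K' ⊓ H := ⟨hxK', hx2⟩
    rwa [hcs hK'c] at this
  obtain ⟨K, -, hK⟩ := zorn_le_nonempty₀ {K : Submodule R M | K ⊓ H = ⊥} zorn2 ⊥ (by simp)
  have hKH : K ⊓ H = ⊥ := hK.prop
  -- the quotient map
  set q : M →ₗ[R] M ⧸ K := K.mkQ with hq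
  have hker : ∀ x : M, q x = 0 ↔ x ∈ K := by
    intro x
    rw [hq, ← LinearMap.mem_ker, Submodule.ker_mkQ]
  -- essentiality of the image of H in M ⧸ K
  have hBig : ∀ L' : Submodule R (M ⧸ K), L' ⊓ Submodule.map q H = ⊥ → L' = ⊥ := by
    intro L' hL'
    have hKle : K ≤ Submodule.comap q L' := by
      intro k hk
      have : q k = 0 := (hker k).mpr hk
      simp [Submodule.mem_comap, this]
    have hLH : Submodule.comap q L' ⊓ H = ⊥ := by
      rw [eq_bot_iff]
      rintro x ⟨hx1, hx2⟩
      have hqx : q x ∈ L' ⊓ Submodule.map q H :=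
        ⟨hx1, Submodule.mem_map_of_mem hx2⟩
      rw [hL', Submodule.mem_bot] at hqx
      have hxK : x ∈ K := (hker x).mp hqx
      have : x ∈ K ⊓ H := ⟨hxK, hx2⟩
      rwa [hKH] at this
    have hcomap : Submodule.comap q L' ≤ K := hK.le_of_ge hLH hKle
    rw [eq_bot_iff]
    intro y hy
    obtain ⟨x, rfl⟩ := K.mkQ_surjective y
    have : x ∈ Submodule.comap q L' := hy
    have hxK : x ∈ K := hcomap this
    simp only [Submodule.mem_bot]
    exact hq ▸ (hker x).mpr hxK
  -- φ : H → M ⧸ K is injective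
  set φ : H →ₗ[R] M ⧸ K := q ∘ₗ H.subtype with hφdef
  have hφ : Function.Injective φ := by
    intro a b hab
    have : q ((a : M) - b) = 0 := by
      rw [map_sub, sub_eq_zero]; exact hab
    have hK' : ((a : M) - b) ∈ K := (hker _).mp this
    have hH' : ((a : M) - b) ∈ H := sub_mem a.2 b.2
    have : ((a : M) - b) ∈ K ⊓ H := ⟨hK', hH'⟩
    rw [hKH, Submodule.mem_bot, sub_eq_zero] at this
    exact Subtype.ext this
  obtain ⟨ψ, hψ⟩ := hM.out φ hφ H.subtype
  have hψinj : Function.Injective ψ := by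
    rw [← LinearMap.ker_eq_bot]
    apply hBig
    rw [eq_bot_iff]
    rintro x ⟨hx1, hx2⟩
    obtain ⟨h, hh, rfl⟩ := hx2
    have : ψ (φ ⟨h, hh⟩) = h := hψ ⟨h, hh⟩
    have hh0 : h = 0 := by
      rw [← this]
      exact hx1
    simp [Submodule.mem_bot, hh0, hq]
  -- range ψ = H by maximality
  have hHle : H ≤ LinearMap.range ψ := by
    intro h hh
    exact ⟨φ ⟨h, hh⟩, hψ ⟨h, hh⟩⟩
  have hessq : EssIn (Submodule.map q H) (⊤ : Submodule R (M ⧸ K)) :=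
    essIn_of_forall le_top (fun L' _ => hBig L')
  have hessH : EssIn H (LinearMap.range ψ) := by
    refine ⟨hHle, fun y hy hy0 => ?_⟩
    obtain ⟨x, rfl⟩ := hy
    have hx0 : x ≠ 0 := by rintro rfl; simp at hy0
    obtain ⟨r, hrq, hr0⟩ := hessq.2 x trivial hx0
    obtain ⟨h, hh, hhq⟩ := hrq
    have key : ψ (r • x) = h := by
      rw [← hhq]
      exact hψ ⟨h, hh⟩
    refine ⟨r, ?_, ?_⟩
    · rw [← map_smul, key]; exact hh
    · rw [← map_smul]
      intro hcon
      exact hr0 (hψinj (by simpa using hcon))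
  have hrange : LinearMap.range ψ = H :=
    le_antisymm (hH.le_of_ge (hHess.trans hessH) hHle) hHle
  -- the projection π
  set π : M →ₗ[R] M := ψ ∘ₗ q with hπdef
  have hπH : ∀ h ∈ H, π h = h := by
    intro h hh
    have : q h = φ ⟨h, hh⟩ := rfl
    simp only [hπdef, LinearMap.comp_apply, this]
    exact hψ ⟨h, hh⟩
  have hπrange : ∀ x, π x ∈ H := by
    intro x
    have : π x ∈ LinearMap.range ψ := ⟨q x, rfl⟩
    rwa [hrange] at this
  have hcompl : IsCompl H (LinearMap.ker π) := by
    constructor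
    · rw [disjoint_iff, eq_bot_iff]
      rintro x ⟨hx1, hx2⟩
      have : π x = 0 := hx2
      rw [hπH x hx1] at this
      simp [Submodule.mem_bot, this]
    · rw [codisjoint_iff, eq_top_iff]
      intro x _
      have h1 : π x ∈ H := hπrange x
      have h2 : x - π x ∈ LinearMap.ker π := by
        rw [LinearMap.mem_ker, map_sub, hπH (π x) h1, sub_self]
      have : x = π x + (x - π x) := by abel
      rw [this]
      exact Submodule.add_mem_sup h1 h2
  refine ⟨H, LinearMap.ker π, hcompl, hHess, ?_⟩
  refine inj_retract hM H.subtype (LinearMap.codRestrict H π hπrange) ?_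
  intro h
  apply Subtype.ext
  simpa using hπH h h.2

end Hull

end BumbyAux

namespace BumbyAux

universe u' v'
variable {R : Type u'} [Ring R]

section EssEmb

variable {W E Z : Type*} [AddCommGroup W] [Module R W] [AddCommGroup E] [Module R E]
  [AddCommGroup Z] [Module R Z]

/-- An injective linear map with essential image. -/
def IsEssEmb (u : W →ₗ[R] E) : Prop :=
  Function.Injective u ∧ ∀ x : E, x ≠ 0 → ∃ r : R, r • x ∈ LinearMap.range u ∧ r • x ≠ 0

lemma IsEssEmb.comp_injective {u : W →ₗ[R] E} (hu : IsEssEmb u) {g : E →ₗ[R] Z}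
    (hg : Function.Injective (g ∘ₗ u)) : Function.Injective g := by
  rw [← LinearMap.ker_eq_bot, eq_bot_iff]
  intro x hx
  rw [Submodule.mem_bot]
  by_contra hx0
  obtain ⟨r, ⟨w, hw⟩, hr0⟩ := hu.2 x hx0
  have h1 : g (u w) = 0 := by
    rw [hw, map_smul, LinearMap.mem_ker.mp hx, smul_zero]
  have : w = 0 := by
    have := hg (a₁ := w) (a₂ := 0) (by simpa using h1)
    exact this
  rw [this, map_zero] at hw
  exact hr0 hw.symm

lemma IsEssEmb.comp_equiv {W' : Type*} [AddCommGroup W'] [Module R W']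
    {u : W →ₗ[R] E} (hu : IsEssEmb u) (e : W' ≃ₗ[R] W) :
    IsEssEmb (u ∘ₗ (e : W' →ₗ[R] W)) := by
  refine ⟨hu.1.comp e.injective, fun x hx0 => ?_⟩
  obtain ⟨r, ⟨w, hw⟩, hr0⟩ := hu.2 x hx0
  exact ⟨r, ⟨e.symm w, by simpa using hw⟩, hr0⟩

lemma IsEssEmb.prodMap {C : Type*} [AddCommGroup C] [Module R C]
    {u : W →ₗ[R] E} (hu : IsEssEmb u) :
    IsEssEmb ((LinearMap.id : C →ₗ[R] C).prodMap u) := by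
  constructor
  · intro a b hab
    simp only [LinearMap.prodMap_apply, LinearMap.id_coe, id_eq, Prod.mk.injEq] at hab
    exact Prod.ext hab.1 (hu.1 hab.2)
  · rintro ⟨c, y⟩ hne
    by_cases hy : y = 0
    · subst hy
      refine ⟨1, ⟨(c, 0), by simp⟩, by simpa using hne⟩
    · obtain ⟨r, ⟨w, hw⟩, hr0⟩ := hu.2 y hy
      refine ⟨r, ⟨(r • c, w), by simp [hw]⟩, ?_⟩
      simp only [Prod.smul_mk, ne_eq, Prod.mk_eq_zero, not_and_or]
      exact Or.inr hr0

end EssEmb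

section Uniq

variable {W E₁ E₂ : Type v'} [AddCommGroup W] [Module R W] [AddCommGroup E₁] [Module R E₁]
  [AddCommGroup E₂] [Module R E₂]

theorem hull_uniq (h₁ : Module.Injective R E₁) (h₂ : Module.Injective R E₂)
    (u₁ : W →ₗ[R] E₁) (u₂ : W →ₗ[R] E₂) (he₁ : IsEssEmb u₁) (he₂ : IsEssEmb u₂) :
    Nonempty (E₁ ≃ₗ[R] E₂) := by
  obtain ⟨θ, hθ⟩ := h₂.out u₁ he₁.1 u₂
  have hθu : ∀ w, θ (u₁ w) = u₂ w := hθ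
  have hθinj : Function.Injective θ := by
    apply he₁.comp_injective (g := θ)
    intro a b hab
    apply he₂.1
    simpa [hθu] using hab
  set Q := LinearMap.range θ with hQ
  have hQinj : Module.Injective R Q := inj_of_equiv h₁ (LinearEquiv.ofInjective θ hθinj)
  obtain ⟨π, hπ⟩ := hQinj.out Q.subtype Subtype.val_injective LinearMap.id
  set g : E₂ →ₗ[R] E₂ := Q.subtype ∘ₗ π with hg
  have hgQ : ∀ x ∈ Q, g x = x := by
    intro x hx
    have h' : π x = ⟨x, hx⟩ := by simpa using hπ ⟨x, hx⟩
    simp [hg, h']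
  have hgu : ∀ w, g (u₂ w) = u₂ w := by
    intro w
    exact hgQ _ (by rw [← hθu w]; exact ⟨u₁ w, rfl⟩)
  have hfix : ∀ x, g x = x := by
    intro x
    have hgx : g x ∈ Q := by
      simp only [hg, LinearMap.comp_apply]
      exact (π x).2
    have hzero : g (x - g x) = 0 := by
      rw [map_sub, hgQ _ hgx, sub_self]
    by_contra hne
    have hy0 : x - g x ≠ 0 := fun h => hne (by rw [sub_eq_zero] at h; exact h.symm)
    obtain ⟨r, ⟨w, hw⟩, hr0⟩ := he₂.2 _ hy0
    have : u₂ w = 0 := by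
      rw [← hgu w, hw, map_smul, hzero, smul_zero]
    rw [this] at hw
    exact hr0 hw.symm
  have hθsurj : Function.Surjective θ := by
    intro x
    have : x ∈ Q := by
      rw [← hfix x]
      simp only [hg, LinearMap.comp_apply]
      exact (π x).2
    exact this
  exact ⟨LinearEquiv.ofBijective θ ⟨hθinj, hθsurj⟩⟩

end Uniq

end BumbyAux

namespace BumbyAux

universe u'' v''

section Crux

variable {R : Type u''} [Ring R] {M Y : Type v''} [AddCommGroup M] [Module R M]
  [AddCommGroup Y] [Module R Y]

/-- The "into the first factor" endomorphism attached to `e : M ≃ M × Y`. -/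
def Tmap (e : M ≃ₗ[R] M × Y) : M →ₗ[R] M :=
  e.symm.toLinearMap ∘ₗ LinearMap.inl R M Y

/-- The embedding of `Y` attached to `e : M ≃ M × Y`. -/
def jmap (e : M ≃ₗ[R] M × Y) : Y →ₗ[R] M :=
  e.symm.toLinearMap ∘ₗ LinearMap.inr R M Y

/-- Projections extracting the `n`-th layer. -/
def proj (e : M ≃ₗ[R] M × Y) : ℕ → (M →ₗ[R] Y)
  | 0 => LinearMap.snd R M Y ∘ₗ e.toLinearMap
  | (n + 1) => proj e n ∘ₗ (LinearMap.fst R M Y ∘ₗ e.toLinearMap)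

variable (e : M ≃ₗ[R] M × Y)

lemma proj_zero_T (x : M) : proj e 0 (Tmap e x) = 0 := by
  simp [proj, Tmap]

lemma proj_succ_T (n : ℕ) (x : M) : proj e (n + 1) (Tmap e x) = proj e n x := by
  simp [proj, Tmap]

lemma proj_zero_j (y : Y) : proj e 0 (jmap e y) = y := by
  simp [proj, jmap]

lemma proj_succ_j (n : ℕ) (y : Y) : proj e (n + 1) (jmap e y) = 0 := by
  simp [proj, jmap]

lemma proj_pow_j (m n : ℕ) (y : Y) :
    proj e n ((Tmap e ^ m) (jmap e y)) = if n = m then y else 0 := by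
  induction m generalizing n with
  | zero =>
    cases n with
    | zero => simpa using proj_zero_j e y
    | succ n => simpa using proj_succ_j e n y
  | succ m ih =>
    have hpow : (Tmap e ^ (m + 1)) (jmap e y) = Tmap e ((Tmap e ^ m) (jmap e y)) := by
      rw [pow_succ']
      rfl
    cases n with
    | zero => rw [hpow, proj_zero_T]; simp
    | succ n =>
      rw [hpow, proj_succ_T, ih]
      simp [Nat.succ_inj]

theorem crux {C D : Type v''} [AddCommGroup C] [Module R C] [AddCommGroup D] [Module R D]
    (hM : Module.Injective R M) (hC : Module.Injective R C) (hD : Module.Injective R D)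
    (e : M ≃ₗ[R] M × (C × D)) : Nonempty (M ≃ₗ[R] M × C) := by
  classical
  set T : M →ₗ[R] M := Tmap e with hT
  set j : (C × D) →ₗ[R] M := jmap e with hj
  set jC : C →ₗ[R] M := j ∘ₗ LinearMap.inl R C D with hjC
  set jD : D →ₗ[R] M := j ∘ₗ LinearMap.inr R C D with hjD
  set uC : (ℕ →₀ C) →ₗ[R] M := Finsupp.lsum ℕ (fun n => (T ^ n) ∘ₗ jC) with huC
  set uD : (ℕ →₀ D) →ₗ[R] M := Finsupp.lsum ℕ (fun n => (T ^ n) ∘ₗ jD) with huD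
  set u : ((ℕ →₀ C) × (ℕ →₀ D)) →ₗ[R] M := uC.coprod uD with hu
  have hprojC : ∀ (n : ℕ) (wc : ℕ →₀ C), proj e n (uC wc) = (wc n, 0) := by
    intro n wc
    have h1 : uC wc = wc.sum fun m c => (T ^ m) (jC c) := by
      simp [huC, Finsupp.lsum_apply, Finsupp.sum]
    rw [h1, map_finsuppSum]
    have h2 : ∀ (m : ℕ) (c : C), proj e n ((T ^ m) (jC c)) = if n = m then ((c, 0) : C × D) else 0 := by
      intro m c
      have : jC c = jmap e (c, 0) := by simp [hjC, hj]
      rw [this, hT, proj_pow_j]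
    simp only [h2]
    rw [Finsupp.sum_ite_eq]
    by_cases h : n ∈ wc.support
    · simp [h]
    · simp [h, Finsupp.notMem_support_iff.mp h, Prod.mk_zero_zero]
  have hprojD : ∀ (n : ℕ) (wd : ℕ →₀ D), proj e n (uD wd) = (0, wd n) := by
    intro n wd
    have h1 : uD wd = wd.sum fun m d => (T ^ m) (jD d) := by
      simp [huD, Finsupp.lsum_apply, Finsupp.sum]
    rw [h1, map_finsuppSum]
    have h2 : ∀ (m : ℕ) (d : D), proj e n ((T ^ m) (jD d)) = if n = m then ((0, d) : C × D) else 0 := by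
      intro m d
      have : jD d = jmap e (0, d) := by simp [hjD, hj]
      rw [this, hT, proj_pow_j]
    simp only [h2]
    rw [Finsupp.sum_ite_eq]
    by_cases h : n ∈ wd.support
    · simp [h]
    · simp [h, Finsupp.notMem_support_iff.mp h, Prod.mk_zero_zero]
  have hproj_u : ∀ (n : ℕ) (w : (ℕ →₀ C) × (ℕ →₀ D)),
      proj e n (u w) = (w.1 n, w.2 n) := by
    intro n w
    have : u w = uC w.1 + uD w.2 := by simp [hu, LinearMap.coprod_apply]
    rw [this, map_add, hprojC, hprojD, Prod.mk_add_mk, add_zero, zero_add]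
  have huinj : Function.Injective u := by
    intro a b hab
    have h : ∀ n : ℕ, ((a.1 n : C), (a.2 n : D)) = (b.1 n, b.2 n) := fun n => by
      rw [← hproj_u n a, ← hproj_u n b, hab]
    refine Prod.ext (Finsupp.ext fun n => ?_) (Finsupp.ext fun n => ?_)
    · exact congrArg Prod.fst (h n)
    · exact congrArg Prod.snd (h n)
  obtain ⟨H, K, hcompl, hess, hinjH⟩ := exists_hull hM (LinearMap.range u)
  have hle : LinearMap.range u ≤ H := hess.1
  set u' : ((ℕ →₀ C) × (ℕ →₀ D)) →ₗ[R] H :=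
    LinearMap.codRestrict H u (fun w => hle ⟨w, rfl⟩) with hu'def
  have hu' : IsEssEmb u' := by
    constructor
    · intro a b hab
      exact huinj (congrArg Subtype.val hab)
    · rintro ⟨x, hx⟩ hx0
      have hx0' : x ≠ 0 := fun h => hx0 (Subtype.ext h)
      obtain ⟨r, ⟨w, hw⟩, hr0⟩ := hess.2 x hx hx0'
      refine ⟨r, ⟨w, Subtype.ext ?_⟩, fun hcon => hr0 ?_⟩
      · simpa [hu'def, LinearMap.codRestrict] using hw
      · simpa using congrArg Subtype.val hcon
  set sC : (ℕ →₀ C) ≃ₗ[R] C × (ℕ →₀ C) :=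
    (Finsupp.domLCongr (Equiv.natEquivNatSumPUnit : ℕ ≃ ℕ ⊕ PUnit.{1})).trans
      ((Finsupp.sumFinsuppLEquivProdFinsupp R).trans
        (((LinearEquiv.refl R (ℕ →₀ C)).prodCongr
            (Finsupp.LinearEquiv.finsuppUnique R C PUnit.{1})).trans
          (LinearEquiv.prodComm R (ℕ →₀ C) C))) with hsC
  set ζ : ((ℕ →₀ C) × (ℕ →₀ D)) ≃ₗ[R] C × ((ℕ →₀ C) × (ℕ →₀ D)) :=
    (sC.prodCongr (LinearEquiv.refl R (ℕ →₀ D))).trans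
      (LinearEquiv.prodAssoc R C (ℕ →₀ C) (ℕ →₀ D)) with hζ
  set u₂ : ((ℕ →₀ C) × (ℕ →₀ D)) →ₗ[R] C × H :=
    ((LinearMap.id : C →ₗ[R] C).prodMap u') ∘ₗ (ζ : _ →ₗ[R] _) with hu₂def
  have hu₂ : IsEssEmb u₂ := (hu'.prodMap (C := C)).comp_equiv ζ
  obtain ⟨eq1⟩ := hull_uniq hinjH (inj_prod hC hinjH) u' u₂ hu' hu₂
  refine ⟨?_⟩
  exact (Submodule.prodEquivOfIsCompl H K hcompl).symm.trans
    ((eq1.prodCongr (LinearEquiv.refl R K)).trans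
      ((LinearEquiv.prodAssoc R C H K).trans
        (((LinearEquiv.refl R C).prodCongr (Submodule.prodEquivOfIsCompl H K hcompl)).trans
          (LinearEquiv.prodComm R C M))))

end Crux

end BumbyAux

namespace BumbyAux

section Split

variable {R : Type*} [Ring R] {M N : Type*} [AddCommGroup M] [Module R M]
  [AddCommGroup N] [Module R N]

lemma split_equiv (f : M →ₗ[R] N) (r : N →ₗ[R] M) (h : r ∘ₗ f = LinearMap.id) :
    Nonempty (N ≃ₗ[R] M × (LinearMap.ker r)) := by
  have hrf : ∀ m, r (f m) = m := fun m => by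
    have := DFunLike.congr_fun h m
    simpa using this
  have hfinj : Function.Injective f := fun a b hab => by
    rw [← hrf a, ← hrf b, hab]
  have hcompl : IsCompl (LinearMap.range f) (LinearMap.ker r) := by
    constructor
    · rw [disjoint_iff, eq_bot_iff]
      rintro x ⟨⟨m, rfl⟩, hx2⟩
      have : r (f m) = 0 := hx2
      rw [hrf] at this
      simp [Submodule.mem_bot, this]
    · rw [codisjoint_iff, eq_top_iff]
      intro x _
      have h1 : f (r x) ∈ LinearMap.range f := ⟨r x, rfl⟩
      have h2 : x - f (r x) ∈ LinearMap.ker r := by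
        rw [LinearMap.mem_ker, map_sub, hrf, sub_self]
      have : x = f (r x) + (x - f (r x)) := by abel
      rw [this]
      exact Submodule.add_mem_sup h1 h2
  exact ⟨(Submodule.prodEquivOfIsCompl _ _ hcompl).symm.trans
    ((LinearEquiv.ofInjective f hfinj).symm.prodCongr (LinearEquiv.refl R (LinearMap.ker r)))⟩

end Split

end BumbyAux

open BumbyAux in
/-- Two injective right `A`-modules (modules over `Aᵐᵒᵖ`), each isomorphic to a
direct summand of the other, are isomorphic.  Being (isomorphic to) a direct
summand is expressed by a split monomorphism. -/
theorem stmt13 (A : Type*) [Ring A]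
    (M N : Type*) [AddCommGroup M] [AddCommGroup N]
    [Module Aᵐᵒᵖ M] [Module Aᵐᵒᵖ N]
    (hM : Module.Injective Aᵐᵒᵖ M) (hN : Module.Injective Aᵐᵒᵖ N)
    (hMN : ∃ (f : M →ₗ[Aᵐᵒᵖ] N) (r : N →ₗ[Aᵐᵒᵖ] M), r ∘ₗ f = LinearMap.id)
    (hNM : ∃ (g : N →ₗ[Aᵐᵒᵖ] M) (s : M →ₗ[Aᵐᵒᵖ] N), s ∘ₗ g = LinearMap.id) :
    Nonempty (M ≃ₗ[Aᵐᵒᵖ] N) := by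
  classical
  set R := Aᵐᵒᵖ
  obtain ⟨f, r, hrf⟩ := hMN
  obtain ⟨g, s, hsg⟩ := hNM
  obtain ⟨α⟩ := split_equiv f r hrf
  obtain ⟨β⟩ := split_equiv g s hsg
  set C := LinearMap.ker r with hC
  set D := LinearMap.ker s with hD
  set γ : M ≃ₗ[R] M × (C × D) :=
    β.trans ((α.prodCongr (LinearEquiv.refl R D)).trans (LinearEquiv.prodAssoc R M C D)) with hγ
  -- internal avatars of `C` and `D` living in the same universe as `M`
  set iC : C →ₗ[R] M :=
    γ.symm.toLinearMap ∘ₗ LinearMap.inr R M (C × D) ∘ₗ LinearMap.inl R C D with hiC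
  set iD : D →ₗ[R] M :=
    γ.symm.toLinearMap ∘ₗ LinearMap.inr R M (C × D) ∘ₗ LinearMap.inr R C D with hiD
  have hiCinj : Function.Injective iC := by
    intro a b hab
    have := γ.symm.injective hab
    simpa [Prod.ext_iff] using this
  have hiDinj : Function.Injective iD := by
    intro a b hab
    have := γ.symm.injective hab
    simpa [Prod.ext_iff] using this
  set C₁ := LinearMap.range iC with hC₁
  set D₁ := LinearMap.range iD with hD₁
  set eC : C ≃ₗ[R] C₁ := LinearEquiv.ofInjective iC hiCinj with heC
  set eD : D ≃ₗ[R] D₁ := LinearEquiv.ofInjective iD hiDinj with heD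
  set ρC : M →ₗ[R] C :=
    LinearMap.fst R C D ∘ₗ LinearMap.snd R M (C × D) ∘ₗ γ.toLinearMap with hρC
  set ρD : M →ₗ[R] D :=
    LinearMap.snd R C D ∘ₗ LinearMap.snd R M (C × D) ∘ₗ γ.toLinearMap with hρD
  have hρCiC : ∀ c : C, ρC (iC c) = c := by
    intro c
    simp [hρC, hiC]
  have hρDiD : ∀ d : D, ρD (iD d) = d := by
    intro d
    simp [hρD, hiD]
  have hinjC₁ : Module.Injective R C₁ := by
    refine inj_retract hM C₁.subtype (eC.toLinearMap ∘ₗ ρC) ?_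
    rintro ⟨-, c, rfl⟩
    apply Subtype.ext
    simp only [LinearMap.comp_apply, Submodule.subtype_apply, hρCiC c]
    rfl
  have hinjD₁ : Module.Injective R D₁ := by
    refine inj_retract hM D₁.subtype (eD.toLinearMap ∘ₗ ρD) ?_
    rintro ⟨-, d, rfl⟩
    apply Subtype.ext
    simp only [LinearMap.comp_apply, Submodule.subtype_apply, hρDiD d]
    rfl
  set γ₁ : M ≃ₗ[R] M × (C₁ × D₁) :=
    γ.trans ((LinearEquiv.refl R M).prodCongr (eC.prodCongr eD)) with hγ₁
  obtain ⟨δ⟩ := crux hM hinjC₁ hinjD₁ γ₁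
  exact ⟨δ.trans (((LinearEquiv.refl R M).prodCongr eC.symm).trans α.symm)⟩
end

section
/- Let M be a nonzero injective right module over a ring A such that every nonzero submodule of M is isomorphic to M. Then the endomorphism ring End_A(M) is a simple ring. -/
/-- If `M` is a nonzero injective right `A`-module (a module over `Aᵐᵒᵖ`) all of
whose nonzero submodules are isomorphic to `M`, then `End_A(M)` is a simple ring. -/
theorem stmt16 (A : Type*) [Ring A]
    (M : Type*) [AddCommGroup M] [Module Aᵐᵒᵖ M] [Nontrivial M]
    (hM : Module.Injective Aᵐᵒᵖ M)
    (hsub : ∀ N : Submodule Aᵐᵒᵖ M, N ≠ ⊥ → Nonempty (N ≃ₗ[Aᵐᵒᵖ] M)) :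
    IsSimpleRing (Module.End Aᵐᵒᵖ M) := by
  classical
  -- every nonzero submodule admits a retraction
  have retr : ∀ K : Submodule Aᵐᵒᵖ M, K ≠ ⊥ →
      ∃ r : M →ₗ[Aᵐᵒᵖ] K, ∀ x : K, r (x : M) = x := by
    intro K hK
    obtain ⟨e⟩ := hsub K hK
    obtain ⟨h, hh⟩ := hM.out K.subtype K.injective_subtype e.toLinearMap
    refine ⟨e.symm.toLinearMap.comp h, fun x => ?_⟩
    simp only [LinearMap.comp_apply, LinearEquiv.coe_coe]
    rw [show h (x : M) = e x from hh x]
    exact e.symm_apply_apply x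
  -- key step : a nonzero element of a two-sided ideal yields an injective element
  have key : ∀ (I : TwoSidedIdeal (Module.End Aᵐᵒᵖ M)) (f : Module.End Aᵐᵒᵖ M),
      f ∈ I → f ≠ 0 → ∃ f' : Module.End Aᵐᵒᵖ M, f' ∈ I ∧ Function.Injective f' := by
    intro I f hfI hf
    by_cases hK : LinearMap.ker f = ⊥
    · exact ⟨f, hfI, LinearMap.ker_eq_bot.mp hK⟩
    · set K := LinearMap.ker f with hKdef
      obtain ⟨r, hr⟩ := retr K hK
      set p : Module.End Aᵐᵒᵖ M := K.subtype.comp r with hp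
      have hpK : ∀ x : K, p (x : M) = x := fun x => by simp [hp, hr x]
      have hpmem : ∀ x : M, p x ∈ K := fun x => (r x).2
      set N := LinearMap.ker p with hN
      have hNne : N ≠ ⊥ := by
        intro h0
        apply hf
        have : ∀ x : M, x ∈ K := by
          intro x
          have h1 : p (x - p x) = 0 := by
            have := hpK ⟨p x, hpmem x⟩
            simp only [map_sub]
            simp only [Submodule.coe_mk] at this
            rw [this, sub_self]
          have h2 : x - p x ∈ N := h1
          rw [h0, Submodule.mem_bot] at h2
          have : x = p x := by linear_combination (norm := abel) h2
          rw [this]; exact hpmem x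
        ext x
        simpa using (LinearMap.mem_ker.mp (this x))
      obtain ⟨α⟩ := hsub N hNne
      set h : Module.End Aᵐᵒᵖ M := N.subtype.comp α.symm.toLinearMap with hhdef
      refine ⟨f * h, I.mul_mem_right _ _ hfI, ?_⟩
      have : LinearMap.ker (f * h) = ⊥ := by
        rw [LinearMap.ker_eq_bot']
        intro x hx
        have hx' : (α.symm x : M) ∈ K := hx
        have hx'' : (α.symm x : M) ∈ N := (α.symm x).2
        have hKN : (α.symm x : M) ∈ N → (α.symm x : M) ∈ K → α.symm x = 0 := by
          intro h1 h2
          have : p (α.symm x : M) = (α.symm x : M) := hpK ⟨_, h2⟩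
          have h3 : (α.symm x : M) = 0 := by
            have := LinearMap.mem_ker.mp h1
            rw [this] at ‹p (α.symm x : M) = (α.symm x : M)›
            exact ‹(0 : M) = (α.symm x : M)›.symm
          exact Subtype.ext h3
        have := hKN hx'' hx'
        have := congrArg α this
        simpa using this
      exact LinearMap.ker_eq_bot.mp this
    -- now the main argument
  refine ⟨{ exists_pair_ne := ?_, eq_bot_or_eq_top := ?_ }⟩
  · -- nontrivial lattice of two-sided ideals
    exact ⟨⊥, ⊤, by
      intro h
      have h1 : (1 : Module.End Aᵐᵒᵖ M) ∈ (⊥ : TwoSidedIdeal (Module.End Aᵐᵒᵖ M)) :=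
        h ▸ TwoSidedIdeal.one_mem ⊤ rfl
      rw [TwoSidedIdeal.mem_bot] at h1
      obtain ⟨m, hm⟩ := exists_ne (0 : M)
      exact hm (by simpa using congrArg (fun g : Module.End Aᵐᵒᵖ M => g m) h1)⟩
  · intro I
    by_cases hI : I = ⊥
    · exact Or.inl hI
    · right
      obtain ⟨f, hfI, hf⟩ : ∃ f, f ∈ I ∧ f ≠ 0 := by
        by_contra hc
        push_neg at hc
        exact hI (by
          ext x
          simp only [TwoSidedIdeal.mem_bot]
          exact ⟨fun hx => hc x hx, fun hx => hx ▸ I.zero_mem⟩)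
      obtain ⟨f', hf'I, hinj⟩ := key I f hfI hf
      -- range of f' is nonzero, get retraction and build a left inverse
      have hRne : LinearMap.range f' ≠ ⊥ := by
        intro h0
        obtain ⟨m, hm⟩ := exists_ne (0 : M)
        apply hm
        have : f' m ∈ (⊥ : Submodule Aᵐᵒᵖ M) := h0 ▸ LinearMap.mem_range_self f' m
        rw [Submodule.mem_bot] at this
        exact hinj (by simpa using this)
      obtain ⟨r, hr⟩ := retr (LinearMap.range f') hRne
      set e : M ≃ₗ[Aᵐᵒᵖ] LinearMap.range f' := LinearEquiv.ofInjective f' hinj with he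
      set g : Module.End Aᵐᵒᵖ M := e.symm.toLinearMap.comp r with hg
      have hone : g * f' = 1 := by
        ext x
        have h1 : r (f' x) = e x := by
          have := hr ⟨f' x, LinearMap.mem_range_self f' x⟩
          exact this.trans (Subtype.ext (LinearEquiv.ofInjective_apply f' (h := hinj) x).symm)
        simp only [Module.End.mul_apply, hg, LinearMap.comp_apply, h1,
          LinearEquiv.coe_coe, LinearEquiv.symm_apply_apply, Module.End.one_apply]
      exact (TwoSidedIdeal.one_mem_iff I).mp (hone ▸ I.mul_mem_left g f' hf'I)
end

section
/- Let M be a nonzero injective right module over a ring A such that every nonzero submodule of M is isomorphic to M. Then every nonzero endomorphism f of M admits endomorphisms g and h of M with h ∘ f ∘ g = id_M. -/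
private theorem inj_equiv {R : Type*} [Ring R] {Q Q' : Type v} [AddCommGroup Q] [Module R Q]
    [AddCommGroup Q'] [Module R Q'] (e : Q' ≃ₗ[R] Q) (hQ : Module.Injective R Q) :
    Module.Injective R Q' := by
  constructor
  intro X Y _ _ _ _ f hf g
  obtain ⟨h, hh⟩ := hQ.out f hf (e.toLinearMap ∘ₗ g)
  exact ⟨e.symm.toLinearMap ∘ₗ h, fun x => by simp [hh x]⟩

/-- If `M` is a nonzero injective right `A`-module (a module over `Aᵐᵒᵖ`) all of
whose nonzero submodules are isomorphic to `M`, then every nonzero endomorphism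
`f` of `M` has endomorphisms `g, h` with `h ∘ f ∘ g = id`. -/
theorem stmt17 (A : Type*) [Ring A]
    (M : Type*) [AddCommGroup M] [Module Aᵐᵒᵖ M] [Nontrivial M]
    (hM : Module.Injective Aᵐᵒᵖ M)
    (hsub : ∀ N : Submodule Aᵐᵒᵖ M, N ≠ ⊥ → Nonempty (N ≃ₗ[Aᵐᵒᵖ] M))
    (f : M →ₗ[Aᵐᵒᵖ] M) (hf : f ≠ 0) :
    ∃ g h : M →ₗ[Aᵐᵒᵖ] M, h ∘ₗ f ∘ₗ g = LinearMap.id := by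
  set K := LinearMap.ker f with hK
  have hKtop : K ≠ ⊤ := by
    intro h
    rw [hK] at h
    exact hf (LinearMap.ker_eq_top.mp h)
  -- find a submodule C with C ⊓ K = ⊥ and C ≠ ⊥
  obtain ⟨C, hCK, hC⟩ : ∃ C : Submodule Aᵐᵒᵖ M, (∀ x ∈ C, x ∈ K → x = 0) ∧ C ≠ ⊥ := by
    by_cases hKbot : K = ⊥
    · exact ⟨⊤, fun x _ hx => by simpa [hKbot] using hx, by simp⟩
    · obtain ⟨eK⟩ := hsub K hKbot
      have hKinj := inj_equiv eK hM
      obtain ⟨r, hr⟩ := hKinj.out K.subtype (Submodule.injective_subtype K)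
        (LinearMap.id (R := Aᵐᵒᵖ) (M := K))
      refine ⟨LinearMap.ker r, fun x hx hxK => ?_, fun hbot => ?_⟩
      · have : r x = ⟨x, hxK⟩ := hr ⟨x, hxK⟩
        have : (⟨x, hxK⟩ : K) = 0 := by rw [← this]; exact hx
        simpa using congrArg Subtype.val this
      · apply hKtop
        rw [eq_top_iff]
        intro x _
        have hr' : ∀ y : K, r (y : M) = y := fun y => hr y
        have hmem : x - ((r x : K) : M) ∈ LinearMap.ker r := by
          simp [map_sub, hr']
        rw [hbot, Submodule.mem_bot, sub_eq_zero] at hmem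
        rw [hmem]; exact (r x).2
  obtain ⟨eC⟩ := hsub C hC
  set g : M →ₗ[Aᵐᵒᵖ] M := C.subtype ∘ₗ eC.symm.toLinearMap with hg
  have hinj : Function.Injective (f ∘ₗ g) := by
    intro x y hxy
    have : f (g x - g y) = 0 := by
      simp only [map_sub]
      simpa using sub_eq_zero.mpr hxy
    have hmem : g x - g y ∈ K := LinearMap.mem_ker.mpr this
    have hCm : g x - g y ∈ C := by
      simp only [hg, LinearMap.comp_apply, Submodule.coe_subtype]
      exact sub_mem (eC.symm x).2 (eC.symm y).2
    have := hCK _ hCm hmem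
    have hgxy : g x = g y := sub_eq_zero.mp this
    have : eC.symm x = eC.symm y := Subtype.ext (by simpa [hg] using hgxy)
    simpa using congrArg eC this
  obtain ⟨h, hh⟩ := hM.out (f ∘ₗ g) hinj (LinearMap.id (R := Aᵐᵒᵖ) (M := M))
  exact ⟨g, h, by ext x; simpa using hh x⟩
end
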